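/- Let n, m be positive integers and let a, b, c, d be elements of a field K. For every t ∈ K such that a·t^{mn} − c·t^m ≠ 0 and a·t^{m(n−1)} − c ≠ 0, setting x(t) = −(b·t^{mn} − d)/(a·t^{mn} − c·t^m), y(t) = −(b·t^{mn} − d)/(a·t^{m(n−1)} − c) and z(t) = t^n, one has (x(t)^n + a·x(t) + b)·z(t)^m = y(t)^n + c·y(t) + d. (This exhibits a rational curve on the surface S¹: g₁(x)·z^m = y^n + c·y + d.) -/

import Mathlib

/-- A rational curve on the surface `S¹ : g₁(x)·z^m = y^n + c·y + d`,
where `g₁(x) = x^n + a·x + b`. -/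
theorem rational_curve_on_S1 (K : Type*) [Field K] (n m : ℕ) (hn : 0 < n) (hm : 0 < m)
    (a b c d : K) (t : K)
    (h1 : a * t ^ (m * n) - c * t ^ m ≠ 0)
    (h2 : a * t ^ (m * (n - 1)) - c ≠ 0) :
    let x : K := -((b * t ^ (m * n) - d) / (a * t ^ (m * n) - c * t ^ m))
    let y : K := -((b * t ^ (m * n) - d) / (a * t ^ (m * (n - 1)) - c))
    let z : K := t ^ n
    (x ^ n + a * x + b) * z ^ m = y ^ n + c * y + d := by
  obtain ⟨k, rfl⟩ : ∃ k, n = k + 1 := ⟨n - 1, (Nat.succ_pred_eq_of_pos hn).symm⟩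
  simp only [Nat.add_sub_cancel] at h2 ⊢
  have ht : t ≠ 0 := by
    rintro rfl
    exact h1 (by simp [zero_pow hm.ne', zero_pow (by positivity : m * (k + 1) ≠ 0)])
  have hsplit : t ^ (m * (k + 1)) = t ^ (m * k) * t ^ m := by
    rw [← pow_add]; ring_nf
  have hA : a * t ^ (m * (k + 1)) - c * t ^ m = t ^ m * (a * t ^ (m * k) - c) := by
    rw [hsplit]; ring
  rw [hA]
  field_simp [h2, mul_ne_zero (pow_ne_zero m ht)]
  rw [neg_pow, div_pow, mul_pow, neg_pow (_ / (a * t ^ (m * k) - c)), div_pow]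
  field_simp
  rw [hsplit]
  ring
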